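/- Let K₁, K₂ : ℝ³×ℝ³ → ℂ satisfy |K₁(x,y)| ≤ c₁ e^{−γ₁|x−y|}/|x−y|² and |K₂(x,y)| ≤ c₂ e^{−γ₂|x−y|}/|x−y| for x ≠ y. Set γ := min{γ₁,γ₂}. Then there exists c > 0 so that for all x ≠ y in ℝ³: ∫_{ℝ³} |K₁(x,z)K₂(z,y)| dz ≤ (c/γ) e^{−(γ/2)|x−y|}/|x−y|. -/

import Mathlib

open MeasureTheory ENNReal

noncomputable section

abbrev E3 := EuclideanSpace ℝ (Fin 3)

open Set Metric in
lemma lintegral_fun_norm_E3 (f : ℝ → ℝ≥0∞) (hf : Measurable f) :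
    ∫⁻ x : E3, f ‖x‖ =
      (volume : Measure E3).toSphere Set.univ *
        ∫⁻ y in Set.Ioi (0:ℝ), ENNReal.ofReal (y ^ 2) * f y := by
  have h1 : ∫⁻ x : E3, f ‖x‖
      = ∫⁻ x : ({(0:E3)}ᶜ : Set E3), f ‖(x : E3)‖
          ∂((volume : Measure E3).comap Subtype.val) := by
    rw [lintegral_subtype_comap (measurableSet_singleton (0:E3)).compl (fun x => f ‖x‖),
      MeasureTheory.restrict_compl_singleton]
  rw [h1]
  have hdim : Module.finrank ℝ E3 = 3 := by simp
  have hmp := Measure.measurePreserving_homeomorphUnitSphereProd (volume : Measure E3)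
  rw [hdim] at hmp
  have hg : Measurable fun p : sphere (0:E3) 1 × Ioi (0:ℝ) => f p.2.1 :=
    hf.comp (measurable_subtype_coe.comp measurable_snd)
  have h2 := hmp.lintegral_comp hg
  have h3 : ∀ x : ({(0:E3)}ᶜ : Set E3),
      f ‖(x : E3)‖ = (fun p : sphere (0:E3) 1 × Ioi (0:ℝ) => f p.2.1)
        (homeomorphUnitSphereProd E3 x) := by
    intro x; simp
  calc ∫⁻ x : ({(0:E3)}ᶜ : Set E3), f ‖(x : E3)‖ ∂((volume : Measure E3).comap Subtype.val)
      = ∫⁻ x : ({(0:E3)}ᶜ : Set E3),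
          (fun p : sphere (0:E3) 1 × Ioi (0:ℝ) => f p.2.1) (homeomorphUnitSphereProd E3 x)
          ∂((volume : Measure E3).comap Subtype.val) := lintegral_congr h3
    _ = ∫⁻ p : sphere (0:E3) 1 × Ioi (0:ℝ), f p.2.1
          ∂((volume : Measure E3).toSphere.prod (Measure.volumeIoiPow (3-1))) := h2
    _ = (volume : Measure E3).toSphere Set.univ *
          ∫⁻ y : Ioi (0:ℝ), f y.1 ∂(Measure.volumeIoiPow 2) := by
        rw [lintegral_prod _ hg.aemeasurable]
        simp [lintegral_const, mul_comm]
    _ = (volume : Measure E3).toSphere Set.univ *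
          ∫⁻ y in Set.Ioi (0:ℝ), ENNReal.ofReal (y ^ 2) * f y := by
        congr 1
        rw [Measure.volumeIoiPow,
          lintegral_withDensity_eq_lintegral_mul
            ((volume : Measure ℝ).comap Subtype.val)
            (f := fun r : Ioi (0:ℝ) => ENNReal.ofReal (r.1 ^ 2))
            (by exact (measurable_subtype_coe.pow_const 2).ennreal_ofReal)
            (g := fun y : Ioi (0:ℝ) => f y.1)
            (hf.comp measurable_subtype_coe)]
        simp only [Pi.mul_apply]
        rw [← lintegral_subtype_comap measurableSet_Ioi
          (fun y => ENNReal.ofReal (y ^ 2) * f y)]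

open Set in
lemma I2_E3 (a : ℝ) (ha : 0 < a) :
    ∫⁻ u : E3, ENNReal.ofReal (Real.exp (-a * ‖u‖) / ‖u‖ ^ 2) =
      (volume : Measure E3).toSphere Set.univ * ENNReal.ofReal (1 / a) := by
  have hf : Measurable fun y : ℝ => ENNReal.ofReal (Real.exp (-a * y) / y ^ 2) :=
    ((Real.measurable_exp.comp (measurable_id.const_mul (-a))).div
      (measurable_id.pow_const 2)).ennreal_ofReal
  rw [lintegral_fun_norm_E3 _ hf]
  congr 1
  have hcg : ∀ᵐ y ∂(volume : Measure ℝ), y ∈ Set.Ioi (0:ℝ) →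
      ENNReal.ofReal (y ^ 2) * ENNReal.ofReal (Real.exp (-a * y) / y ^ 2) =
        ENNReal.ofReal (Real.exp (-a * y)) := by
    refine ae_of_all _ fun y hy => ?_
    have hy0 : (0:ℝ) < y := hy
    rw [← ENNReal.ofReal_mul (by positivity)]
    congr 1
    field_simp
  rw [setLIntegral_congr_fun_ae measurableSet_Ioi hcg,
    ← ofReal_integral_eq_lintegral_ofReal (exp_neg_integrableOn_Ioi 0 ha)
      (ae_of_all _ fun y => (Real.exp_pos _).le)]
  congr 1
  have := integral_comp_mul_left_Ioi (fun u : ℝ => Real.exp (-u)) 0 ha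
  simp only [mul_zero, neg_mul] at this ⊢
  rw [show (fun x : ℝ => Real.exp (-(a * x)))
      = fun x : ℝ => (fun u : ℝ => Real.exp (-u)) (a * x) from rfl] at this
  rw [this, integral_exp_neg_Ioi]
  simp [abs_of_pos (inv_pos.mpr ha), one_div]

lemma key_real {γ R r₁ r₂ : ℝ} (hγ : 0 < γ) (hR : 0 < R) (h1 : 0 < r₁) (h2 : 0 < r₂)
    (htri : R ≤ r₁ + r₂) :
    Real.exp (-γ * r₁) / r₁ ^ 2 * (Real.exp (-γ * r₂) / r₂) ≤
      2 / R * Real.exp (-(γ / 2) * R) *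
        (Real.exp (-(γ / 2) * r₁) / r₁ ^ 2 + Real.exp (-(γ / 2) * r₂) / r₂ ^ 2) := by
  set e1 := Real.exp (-(γ / 2) * r₁) with he1
  set e2 := Real.exp (-(γ / 2) * r₂) with he2
  set eR := Real.exp (-(γ / 2) * R) with heR
  have he1p : 0 < e1 := Real.exp_pos _
  have he2p : 0 < e2 := Real.exp_pos _
  have heRp : 0 < eR := Real.exp_pos _
  have hx1 : Real.exp (-γ * r₁) = e1 * e1 := by
    rw [he1, ← Real.exp_add]; ring_nf
  have hx2 : Real.exp (-γ * r₂) = e2 * e2 := by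
    rw [he2, ← Real.exp_add]; ring_nf
  have h12 : e1 * e2 ≤ eR := by
    rw [he1, he2, heR, ← Real.exp_add]
    exact Real.exp_le_exp.2 (by nlinarith)
  have he1le : e1 ≤ 1 := by
    rw [he1, Real.exp_le_one_iff]; nlinarith
  have he2le : e2 ≤ 1 := by
    rw [he2, Real.exp_le_one_iff]; nlinarith
  have hform : 2 / R * eR * (e1 / r₁ ^ 2 + e2 / r₂ ^ 2)
      = 2 * eR * (e1 * r₂ ^ 2 + e2 * r₁ ^ 2) / (R * (r₁ ^ 2 * r₂ ^ 2)) := by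
    field_simp
  rw [hx1, hx2, div_mul_div_comm, hform,
    div_le_div_iff₀ (by positivity) (by positivity)]
  rcases le_total R (2 * r₂) with h | h
  · have k1 : e1 * e1 * (e2 * e2) ≤ eR * e1 :=
      calc e1 * e1 * (e2 * e2) = (e1 * e2) * (e1 * e2) := by ring
        _ ≤ eR * (e1 * e2) := mul_le_mul_of_nonneg_right h12 (by positivity)
        _ = (eR * e1) * e2 := by ring
        _ ≤ (eR * e1) * 1 := mul_le_mul_of_nonneg_left he2le (by positivity)
        _ = eR * e1 := by ring
    have k2 : R * r₂ ≤ 2 * r₂ ^ 2 := by nlinarith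
    have k3 : e1 * e1 * (e2 * e2) * (R * r₂) ≤ eR * e1 * (2 * r₂ ^ 2) :=
      mul_le_mul k1 k2 (by positivity) (by positivity)
    calc e1 * e1 * (e2 * e2) * (R * (r₁ ^ 2 * r₂ ^ 2))
        = (e1 * e1 * (e2 * e2) * (R * r₂)) * (r₁ ^ 2 * r₂) := by ring
      _ ≤ (eR * e1 * (2 * r₂ ^ 2)) * (r₁ ^ 2 * r₂) :=
          mul_le_mul_of_nonneg_right k3 (by positivity)
      _ ≤ 2 * eR * (e1 * r₂ ^ 2 + e2 * r₁ ^ 2) * (r₁ ^ 2 * r₂) := by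
          have h5 : (0:ℝ) ≤ 2 * (eR * e2) * (r₁ ^ 2 * (r₁ ^ 2 * r₂)) := by positivity
          nlinarith [h5]
  · have hr1 : R ≤ 2 * r₁ := by nlinarith
    have hr21 : r₂ ≤ r₁ := by nlinarith
    have k1 : e1 * e1 * (e2 * e2) ≤ eR * e2 :=
      calc e1 * e1 * (e2 * e2) = (e1 * e2) * (e1 * e2) := by ring
        _ ≤ eR * (e1 * e2) := mul_le_mul_of_nonneg_right h12 (by positivity)
        _ = (eR * e2) * e1 := by ring
        _ ≤ (eR * e2) * 1 := mul_le_mul_of_nonneg_left he1le (by positivity)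
        _ = eR * e2 := by ring
    have k2 : R * r₂ ≤ 2 * r₁ ^ 2 := by nlinarith
    have k3 : e1 * e1 * (e2 * e2) * (R * r₂) ≤ eR * e2 * (2 * r₁ ^ 2) :=
      mul_le_mul k1 k2 (by positivity) (by positivity)
    calc e1 * e1 * (e2 * e2) * (R * (r₁ ^ 2 * r₂ ^ 2))
        = (e1 * e1 * (e2 * e2) * (R * r₂)) * (r₁ ^ 2 * r₂) := by ring
      _ ≤ (eR * e2 * (2 * r₁ ^ 2)) * (r₁ ^ 2 * r₂) :=
          mul_le_mul_of_nonneg_right k3 (by positivity)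
      _ ≤ 2 * eR * (e1 * r₂ ^ 2 + e2 * r₁ ^ 2) * (r₁ ^ 2 * r₂) := by
          have h5 : (0:ℝ) ≤ 2 * (eR * e1) * (r₂ ^ 2 * (r₁ ^ 2 * r₂)) := by positivity
          have h6 : 2 * eR * (e1 * r₂ ^ 2 + e2 * r₁ ^ 2) * (r₁ ^ 2 * r₂)
              - (eR * e2 * (2 * r₁ ^ 2)) * (r₁ ^ 2 * r₂)
              = 2 * (eR * e1) * (r₂ ^ 2 * (r₁ ^ 2 * r₂)) := by ring
          linarith [h5, h6]

theorem kernel_composition_bound_sing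
    (K₁ K₂ : E3 → E3 → ℂ) (c₁ c₂ γ₁ γ₂ : ℝ)
    (hc₁ : 0 < c₁) (hc₂ : 0 < c₂) (hγ₁ : 0 < γ₁) (hγ₂ : 0 < γ₂)
    (hK₁ : Measurable (Function.uncurry K₁)) (hK₂ : Measurable (Function.uncurry K₂))
    (hb₁ : ∀ x y : E3, x ≠ y → ‖K₁ x y‖ ≤ c₁ * Real.exp (-γ₁ * ‖x - y‖) / ‖x - y‖ ^ 2)
    (hb₂ : ∀ x y : E3, x ≠ y → ‖K₂ x y‖ ≤ c₂ * Real.exp (-γ₂ * ‖x - y‖) / ‖x - y‖) :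
    ∃ c > 0, ∀ x y : E3, x ≠ y →
      ∫⁻ z : E3, (‖K₁ x z‖₊ : ℝ≥0∞) * (‖K₂ z y‖₊ : ℝ≥0∞) ≤
        ENNReal.ofReal (c / min γ₁ γ₂ * Real.exp (-(min γ₁ γ₂ / 2) * ‖x - y‖) / ‖x - y‖) := by
  set B := ((volume : Measure E3).toSphere Set.univ).toReal with hBdef
  have hB : 0 ≤ B := ENNReal.toReal_nonneg
  refine ⟨8 * c₁ * c₂ * (B + 1), by positivity, fun x y hxy => ?_⟩
  set γ := min γ₁ γ₂ with hγdef
  have hγ : 0 < γ := lt_min hγ₁ hγ₂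
  have hγ1 : γ ≤ γ₁ := min_le_left _ _
  have hγ2 : γ ≤ γ₂ := min_le_right _ _
  set R := ‖x - y‖ with hRdef
  have hR : 0 < R := by rw [hRdef]; exact norm_sub_pos_iff.mpr hxy
  set C := 2 * c₁ * c₂ / R * Real.exp (-(γ / 2) * R) with hCdef
  have hCpos : 0 < C := by positivity
  -- a.e. pointwise bound
  have hae : ∀ᵐ z : E3, z ≠ x ∧ z ≠ y := by
    have h1 : ∀ᵐ z : E3, z ≠ x := by
      refine ae_iff.2 ?_
      convert measure_singleton (μ := (volume : Measure E3)) x using 2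
      ext z; simp
    have h2 : ∀ᵐ z : E3, z ≠ y := by
      refine ae_iff.2 ?_
      convert measure_singleton (μ := (volume : Measure E3)) y using 2
      ext z; simp
    exact h1.and h2
  have hpt : ∀ᵐ z : E3, (‖K₁ x z‖₊ : ℝ≥0∞) * (‖K₂ z y‖₊ : ℝ≥0∞) ≤
      ENNReal.ofReal (C * (Real.exp (-(γ / 2) * ‖x - z‖) / ‖x - z‖ ^ 2
        + Real.exp (-(γ / 2) * ‖z - y‖) / ‖z - y‖ ^ 2)) := by
    filter_upwards [hae] with z hz
    obtain ⟨hzx, hzy⟩ := hz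
    have h1 : 0 < ‖x - z‖ := norm_sub_pos_iff.mpr hzx.symm
    have h2 : 0 < ‖z - y‖ := norm_sub_pos_iff.mpr hzy
    have htri : R ≤ ‖x - z‖ + ‖z - y‖ := by
      rw [hRdef]; exact norm_sub_le_norm_sub_add_norm_sub x z y
    have hK : ‖K₁ x z‖ * ‖K₂ z y‖ ≤ C * (Real.exp (-(γ / 2) * ‖x - z‖) / ‖x - z‖ ^ 2
        + Real.exp (-(γ / 2) * ‖z - y‖) / ‖z - y‖ ^ 2) := by
      have e1 : Real.exp (-γ₁ * ‖x - z‖) ≤ Real.exp (-γ * ‖x - z‖) :=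
        Real.exp_le_exp.2 (by nlinarith [norm_nonneg (x - z)])
      have e2 : Real.exp (-γ₂ * ‖z - y‖) ≤ Real.exp (-γ * ‖z - y‖) :=
        Real.exp_le_exp.2 (by nlinarith [norm_nonneg (z - y)])
      calc ‖K₁ x z‖ * ‖K₂ z y‖
          ≤ (c₁ * Real.exp (-γ₁ * ‖x - z‖) / ‖x - z‖ ^ 2) *
            (c₂ * Real.exp (-γ₂ * ‖z - y‖) / ‖z - y‖) :=
            mul_le_mul (hb₁ x z hzx.symm) (hb₂ z y hzy) (norm_nonneg _) (by positivity)
        _ ≤ (c₁ * Real.exp (-γ * ‖x - z‖) / ‖x - z‖ ^ 2) *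
            (c₂ * Real.exp (-γ * ‖z - y‖) / ‖z - y‖) := by gcongr
        _ = (c₁ * c₂) * (Real.exp (-γ * ‖x - z‖) / ‖x - z‖ ^ 2 *
            (Real.exp (-γ * ‖z - y‖) / ‖z - y‖)) := by ring
        _ ≤ (c₁ * c₂) * (2 / R * Real.exp (-(γ / 2) * R) *
            (Real.exp (-(γ / 2) * ‖x - z‖) / ‖x - z‖ ^ 2
              + Real.exp (-(γ / 2) * ‖z - y‖) / ‖z - y‖ ^ 2)) :=
            mul_le_mul_of_nonneg_left (key_real hγ hR h1 h2 htri) (by positivity)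
        _ = C * (Real.exp (-(γ / 2) * ‖x - z‖) / ‖x - z‖ ^ 2
            + Real.exp (-(γ / 2) * ‖z - y‖) / ‖z - y‖ ^ 2) := by
            rw [hCdef]; ring
    calc (‖K₁ x z‖₊ : ℝ≥0∞) * (‖K₂ z y‖₊ : ℝ≥0∞)
        = ENNReal.ofReal (‖K₁ x z‖ * ‖K₂ z y‖) := by
          rw [ENNReal.ofReal_mul (norm_nonneg _), ofReal_norm_eq_enorm,
            ofReal_norm_eq_enorm]; rfl
      _ ≤ _ := ENNReal.ofReal_le_ofReal hK
  -- measurability of the comparison functions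
  have hφ : Measurable fun t : ℝ => ENNReal.ofReal (Real.exp (-(γ / 2) * t) / t ^ 2) :=
    ((Real.measurable_exp.comp (measurable_id.const_mul (-(γ / 2)))).div
      (measurable_id.pow_const 2)).ennreal_ofReal
  have hm1 : Measurable fun z : E3 =>
      ENNReal.ofReal (Real.exp (-(γ / 2) * ‖x - z‖) / ‖x - z‖ ^ 2) :=
    hφ.comp (measurable_const.sub measurable_id).norm
  -- main computation
  calc ∫⁻ z : E3, (‖K₁ x z‖₊ : ℝ≥0∞) * (‖K₂ z y‖₊ : ℝ≥0∞)
      ≤ ∫⁻ z : E3, ENNReal.ofReal (C * (Real.exp (-(γ / 2) * ‖x - z‖) / ‖x - z‖ ^ 2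
          + Real.exp (-(γ / 2) * ‖z - y‖) / ‖z - y‖ ^ 2)) := lintegral_mono_ae hpt
    _ = ENNReal.ofReal C * ∫⁻ z : E3,
          (ENNReal.ofReal (Real.exp (-(γ / 2) * ‖x - z‖) / ‖x - z‖ ^ 2)
            + ENNReal.ofReal (Real.exp (-(γ / 2) * ‖z - y‖) / ‖z - y‖ ^ 2)) := by
        rw [← lintegral_const_mul' _ _ ENNReal.ofReal_ne_top]
        refine lintegral_congr fun z => ?_
        rw [ENNReal.ofReal_mul hCpos.le, ENNReal.ofReal_add (by positivity) (by positivity)]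
    _ = ENNReal.ofReal C *
          ((∫⁻ z : E3, ENNReal.ofReal (Real.exp (-(γ / 2) * ‖x - z‖) / ‖x - z‖ ^ 2))
            + ∫⁻ z : E3, ENNReal.ofReal (Real.exp (-(γ / 2) * ‖z - y‖) / ‖z - y‖ ^ 2)) := by
        rw [lintegral_add_left hm1]
    _ = ENNReal.ofReal C *
          ((volume : Measure E3).toSphere Set.univ * ENNReal.ofReal (1 / (γ / 2))
            + (volume : Measure E3).toSphere Set.univ * ENNReal.ofReal (1 / (γ / 2))) := by
        congr 1
        congr 1
        · have hrev : ∀ z : E3, ENNReal.ofReal (Real.exp (-(γ / 2) * ‖x - z‖) / ‖x - z‖ ^ 2)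
              = (fun u : E3 => ENNReal.ofReal (Real.exp (-(γ / 2) * ‖u‖) / ‖u‖ ^ 2)) (z - x) :=
            fun z => by rw [norm_sub_rev x z]
          rw [lintegral_congr hrev, lintegral_sub_right_eq_self
            (fun u : E3 => ENNReal.ofReal (Real.exp (-(γ / 2) * ‖u‖) / ‖u‖ ^ 2)) x]
          exact I2_E3 (γ / 2) (by positivity)
        · rw [lintegral_sub_right_eq_self
            (fun u : E3 => ENNReal.ofReal (Real.exp (-(γ / 2) * ‖u‖) / ‖u‖ ^ 2)) y]
          exact I2_E3 (γ / 2) (by positivity)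
    _ = ENNReal.ofReal (C * (B * (1 / (γ / 2)) + B * (1 / (γ / 2)))) := by
        rw [show (volume : Measure E3).toSphere Set.univ = ENNReal.ofReal B from
          (ENNReal.ofReal_toReal (measure_ne_top _ _)).symm]
        rw [← ENNReal.ofReal_mul hB, ← ENNReal.ofReal_add (by positivity) (by positivity),
          ← ENNReal.ofReal_mul hCpos.le]
    _ ≤ ENNReal.ofReal (8 * c₁ * c₂ * (B + 1) / γ * Real.exp (-(γ / 2) * R) / R) := by
        apply ENNReal.ofReal_le_ofReal
        have hL : C * (B * (1 / (γ / 2)) + B * (1 / (γ / 2)))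
            = 8 * c₁ * c₂ * B * (Real.exp (-(γ / 2) * R) / (γ * R)) := by
          rw [hCdef]; field_simp; ring
        have hRt : 8 * c₁ * c₂ * (B + 1) / γ * Real.exp (-(γ / 2) * R) / R
            = 8 * c₁ * c₂ * (B + 1) * (Real.exp (-(γ / 2) * R) / (γ * R)) := by
          field_simp
        rw [hL, hRt]
        have : 8 * c₁ * c₂ * B ≤ 8 * c₁ * c₂ * (B + 1) := by nlinarith
        exact mul_le_mul_of_nonneg_right this (by positivity)
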